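/- With the same definitions of H₁,K₁,H₂,K₂ in terms of h₁,h₂,k₁,k₂, F₁,F₂,G₁,G₂ and arbitrary β₁,…,β₄ as in the two-generator perturbation: if F₁k₁+G₁ĥ₁+F₂k₂+G₂ĥ₂ = 0 then F₁K₁+G₁Ĥ₁+F₂K₂+G₂Ĥ₂ = 0 pointwise. -/
import Mathlib


open Metric

/-- The hat involution: `hat P z = conj (P (conj z))`. -/
noncomputable def hat (P : ℂ → ℂ) : ℂ → ℂ := fun z => starRingEnd ℂ (P (starRingEnd ℂ z))

theorem perturbation_preserves_second_Bezout
    (F₁ F₂ G₁ G₂ h₁ h₂ k₁ k₂ β₁ β₂ β₃ β₄ H₁ H₂ K₁ K₂ : ℂ → ℂ)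
    (hH₁ : H₁ = fun z => h₁ z + β₁ z * (hat F₁ z * F₂ z + hat G₂ z * G₁ z)
      + β₂ z * (hat F₂ z * F₂ z + hat G₂ z * G₂ z)
      - β₃ z * (hat F₂ z * G₁ z - hat F₁ z * G₂ z))
    (hK₁ : K₁ = fun z => k₁ z + hat β₁ z * (hat F₁ z * G₂ z - hat F₂ z * G₁ z)
      - hat β₃ z * (hat F₁ z * F₂ z + hat G₂ z * G₁ z)
      - hat β₄ z * (hat F₂ z * F₂ z + hat G₂ z * G₂ z))
    (hH₂ : H₂ = fun z => h₂ z - β₁ z * (hat F₁ z * F₁ z + hat G₁ z * G₁ z)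
      - β₂ z * (hat F₂ z * F₁ z + hat G₁ z * G₂ z)
      + β₄ z * (hat F₁ z * G₂ z - hat F₂ z * G₁ z))
    (hK₂ : K₂ = fun z => k₂ z + hat β₂ z * (hat F₁ z * G₂ z - hat F₂ z * G₁ z)
      + hat β₃ z * (hat F₁ z * F₁ z + hat G₁ z * G₁ z)
      + hat β₄ z * (hat F₂ z * F₁ z + hat G₁ z * G₂ z))
    (heq2 : ∀ z ∈ ball (0 : ℂ) 1,
      F₁ z * k₁ z + G₁ z * hat h₁ z + F₂ z * k₂ z + G₂ z * hat h₂ z = 0) :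
    ∀ z ∈ ball (0 : ℂ) 1,
      F₁ z * K₁ z + G₁ z * hat H₁ z + F₂ z * K₂ z + G₂ z * hat H₂ z = 0 := by
  intro z hz
  have h := heq2 z hz
  subst hH₁ hK₁ hH₂ hK₂
  simp only [hat, map_add, map_sub, map_mul, Complex.conj_conj] at *
  linear_combination h
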